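/- For r1, r2 ≤ −1 with 1/r2 ≤ 1/r1, fixed z ∈ (0, 1/2] and x > 1, the function g(x) = ∫_{(1−z)/x}^{(x−z)/x} (1−y)^{1/r1 − 1} y^{1/r2 − 1} (y − 1 + z) dy satisfies g(x) ≤ 0 for all x ≥ 1. -/

import Mathlib

open MeasureTheory ProbabilityTheory Real Finset

noncomputable section

variable {Ω : Type*} [MeasurableSpace Ω]

/-- `X ~ Pareto(α)` : cdf `1 - x^(-α)` for `x ≥ 1`. -/
def IsPareto (P : Measure Ω) (α : ℝ) (X : Ω → ℝ) : Prop :=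
  Measurable X ∧ (∀ x : ℝ, 1 ≤ x → P {ω | x < X ω} = ENNReal.ofReal (x ^ (-α))) ∧
    P {ω | X ω < 1} = 0

/-- the increasing rearrangement of a vector -/
def sortedVec {n : ℕ} (f : Fin n → ℝ) : Fin n → ℝ := f ∘ Tuple.sort f

/-- `MajorizedBy θ η` : `θ ⪯ η`, i.e. equal sums and the sum of the `k` smallest
components of `θ` is at least that of `η` for each `k`. -/
def MajorizedBy {n : ℕ} (θ η : Fin n → ℝ) : Prop :=
  (∑ i, θ i = ∑ i, η i) ∧
  ∀ k : ℕ, k ≤ n →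
    ∑ i ∈ Finset.univ.filter (fun i : Fin n => (i : ℕ) < k), sortedVec η i ≤
    ∑ i ∈ Finset.univ.filter (fun i : Fin n => (i : ℕ) < k), sortedVec θ i


lemma aux_key (p q z y : ℝ) (hq2 : 0 ≤ q + 2) (hq : q ≤ 0) (hpq : 0 ≤ p - q)
    (hz : 0 < z) (hz2 : z ≤ 1/2) (hy : 1 ≤ y) :
    (z/y)^p * ((y-z)/y)^q * (z*z) ≤ ((y-1+z)/y)^p * ((1-z)/y)^q * ((1-z)*(1-z)) := by
  have hy0 : (0:ℝ) < y := by linarith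
  have h1z : (0:ℝ) < 1 - z := by linarith
  have hyz : (0:ℝ) < y - z := by linarith
  have hy1z : (0:ℝ) < y - 1 + z := by linarith
  have e2 : ∀ w : ℝ, 0 ≤ w → w * w = w ^ (2:ℝ) := by
    intro w hw
    rw [show (2:ℝ) = ((2:ℕ):ℝ) by norm_num, Real.rpow_natCast, pow_two]
  have main : z^p * (y-z)^q * (z*z) ≤ (y-1+z)^p * (1-z)^q * ((1-z)*(1-z)) := by
    have eL : z^p * (y-z)^q * (z*z) = z^(p-q) * z^(q+2) * (y-z)^q := by
      rw [e2 z hz.le, mul_right_comm, ← Real.rpow_add hz,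
        show p + (2:ℝ) = (p-q) + (q+2) by ring, Real.rpow_add hz]
    have eR : (y-1+z)^(p-q) * (1-z)^(q+2) * (y-1+z)^q =
        (y-1+z)^p * (1-z)^q * ((1-z)*(1-z)) := by
      rw [mul_right_comm, ← Real.rpow_add hy1z, show p - q + q = p by ring,
        Real.rpow_add h1z, ← e2 (1-z) h1z.le]; ring
    rw [eL, ← eR]
    have i1 : z^(p-q) ≤ (y-1+z)^(p-q) := Real.rpow_le_rpow hz.le (by linarith) hpq
    have i2 : z^(q+2) ≤ (1-z)^(q+2) := Real.rpow_le_rpow hz.le (by linarith) hq2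
    have i3 : (y-z)^q ≤ (y-1+z)^q := Real.rpow_le_rpow_of_nonpos hy1z (by linarith) hq
    exact mul_le_mul (mul_le_mul i1 i2 (Real.rpow_nonneg hz.le _)
        (Real.rpow_nonneg hy1z.le _)) i3 (Real.rpow_nonneg hyz.le _)
      (mul_nonneg (Real.rpow_nonneg hy1z.le _) (Real.rpow_nonneg h1z.le _))
  have hP : (0:ℝ) < y^p * y^q :=
    mul_pos (Real.rpow_pos_of_pos hy0 _) (Real.rpow_pos_of_pos hy0 _)
  rw [Real.div_rpow hz.le hy0.le, Real.div_rpow hyz.le hy0.le,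
    Real.div_rpow hy1z.le hy0.le, Real.div_rpow h1z.le hy0.le]
  calc z^p/y^p * ((y-z)^q/y^q) * (z*z) = (z^p * (y-z)^q * (z*z)) / (y^p * y^q) := by ring
    _ ≤ ((y-1+z)^p * (1-z)^q * ((1-z)*(1-z))) / (y^p * y^q) :=
        (div_le_div_iff_of_pos_right hP).mpr main
    _ = (y-1+z)^p/y^p * ((1-z)^q/y^q) * ((1-z)*(1-z)) := by ring

lemma aux_main (p q z : ℝ) (hq2 : 0 ≤ q + 2) (hq : q ≤ 0) (hpq : 0 ≤ p - q)
    (hz : 0 < z) (hz2 : z ≤ 1/2) :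
    ∀ x : ℝ, 1 ≤ x →
      (∫ y in ((1 - z) / x)..((x - z) / x), (1 - y) ^ p * y ^ q * (y - 1 + z)) ≤ 0 := by
  intro x hx
  have h1z : (0:ℝ) < 1 - z := by linarith
  set F : ℝ → ℝ := fun y => (1 - y) ^ p * y ^ q * (y - 1 + z) with hF
  have hFcont : ContinuousOn F (Set.Ioo 0 1) := by
    apply ContinuousOn.mul
    apply ContinuousOn.mul
    · exact ContinuousOn.rpow_const (continuous_const.sub continuous_id).continuousOn
        (fun y hy => Or.inl (by intro h; have := hy.2; linarith))
    · exact ContinuousOn.rpow_const continuous_id.continuousOn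
        (fun y hy => Or.inl (ne_of_gt hy.1))
    · exact ((continuous_id.sub continuous_const).add continuous_const).continuousOn
  have hmemz : (1 - z) ∈ Set.Ioo (0:ℝ) 1 := ⟨h1z, by linarith⟩
  have hmem : ∀ y : ℝ, 1 ≤ y →
      (1 - z)/y ∈ Set.Ioo (0:ℝ) 1 ∧ (y - z)/y ∈ Set.Ioo (0:ℝ) 1 := by
    intro y hy
    have hy0 : (0:ℝ) < y := by linarith
    constructor
    · exact ⟨div_pos h1z hy0, (div_lt_one hy0).mpr (by linarith)⟩
    · exact ⟨div_pos (by linarith) hy0, (div_lt_one hy0).mpr (by linarith)⟩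
  have hInt : ∀ t ∈ Set.Ioo (0:ℝ) 1, IntervalIntegrable F volume (1 - z) t := by
    intro t ht
    exact (hFcont.mono (Set.ordConnected_Ioo.uIcc_subset hmemz ht)).intervalIntegrable
  set H : ℝ → ℝ := fun t => ∫ y in (1 - z)..t, F y with hHdef
  have hH : ∀ t ∈ Set.Ioo (0:ℝ) 1, HasDerivAt H (F t) t := by
    intro t ht
    exact intervalIntegral.integral_hasDerivAt_right (hInt t ht)
      (hFcont.stronglyMeasurableAtFilter isOpen_Ioo t ht)
      (hFcont.continuousAt (Ioo_mem_nhds ht.1 ht.2))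
  set G : ℝ → ℝ := fun w => H ((w - z)/w) - H ((1 - z)/w) with hGdef
  have hG : ∀ y : ℝ, 1 ≤ y → HasDerivAt G
      (F ((y - z)/y) * (z/y^2) - F ((1 - z)/y) * (-((1-z)/y^2))) y := by
    intro y hy
    have hy0 : (0:ℝ) < y := by linarith
    have hb : HasDerivAt (fun w => (w - z)/w) (z/y^2) y := by
      have h : HasDerivAt (fun w => (w - z)/w) ((1 * y - (y - z) * 1) / y ^ 2) y :=
        ((hasDerivAt_id y).sub_const z).div (hasDerivAt_id y) (ne_of_gt hy0)
      simp only [one_mul, mul_one] at h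
      convert h using 1; ring
    have ha : HasDerivAt (fun w => (1 - z)/w) (-((1-z)/y^2)) y := by
      have h : HasDerivAt (fun w => (1 - z)/w) ((0 * y - (1 - z) * 1) / y ^ 2) y :=
        (hasDerivAt_const y (1 - z)).div (hasDerivAt_id y) (ne_of_gt hy0)
      simp only [one_mul, mul_one] at h
      convert h using 1; ring
    have h1 := HasDerivAt.comp (h := fun w => (w - z)/w) y (hH _ (hmem y hy).2) hb
    have h2 := HasDerivAt.comp (h := fun w => (1 - z)/w) y (hH _ (hmem y hy).1) ha
    exact h1.sub h2
  have hsign : ∀ y : ℝ, 1 ≤ y →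
      F ((y - z)/y) * (z/y^2) - F ((1 - z)/y) * (-((1-z)/y^2)) ≤ 0 := by
    intro y hy
    have hy0 : (0:ℝ) < y := by linarith
    have hyne : y ≠ 0 := ne_of_gt hy0
    have e1 : 1 - (y - z)/y = z/y := by
      rw [eq_div_iff hyne, sub_mul, div_mul_cancel₀ _ hyne]; ring
    have e2 : (y - z)/y - 1 + z = z*(y-1)/y := by field_simp; ring
    have e3 : 1 - (1 - z)/y = (y-1+z)/y := by field_simp; ring
    have e4 : (1 - z)/y - 1 + z = -((1-z)*(y-1)/y) := by field_simp; ring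
    have hkey := aux_key p q z y hq2 hq hpq hz hz2 hy
    have hc : (0:ℝ) ≤ (y-1)/y^3 := div_nonneg (by linarith) (by positivity)
    have h := mul_le_mul_of_nonneg_right hkey hc
    simp only [hF]
    rw [e1, e2, e3, e4]
    set A := (z/y)^p * ((y-z)/y)^q with hA
    set B := ((y-1+z)/y)^p * ((1-z)/y)^q with hB
    have expand : A * (z*(y-1)/y) * (z/y^2) - B * (-((1-z)*(y-1)/y)) * (-((1-z)/y^2))
        = A * (z*z) * ((y-1)/y^3) - B * ((1-z)*(1-z)) * ((y-1)/y^3) := by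
      field_simp
    calc (z/y)^p * ((y-z)/y)^q * (z*(y-1)/y) * (z/y^2)
          - ((y-1+z)/y)^p * ((1-z)/y)^q * (-((1-z)*(y-1)/y)) * (-((1-z)/y^2))
        = A * (z*z) * ((y-1)/y^3) - B * ((1-z)*(1-z)) * ((y-1)/y^3) := expand
      _ ≤ 0 := by linarith
  have hant : AntitoneOn G (Set.Icc 1 x) := by
    apply antitoneOn_of_deriv_nonpos (convex_Icc 1 x)
    · intro w hw; exact (hG w hw.1).continuousAt.continuousWithinAt
    · rw [interior_Icc]; intro w hw
      exact (hG w hw.1.le).differentiableAt.differentiableWithinAt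
    · rw [interior_Icc]; intro w hw
      rw [(hG w hw.1.le).deriv]; exact hsign w hw.1.le
  have hG1 : G 1 = 0 := by simp [hGdef]
  have hGx : G x ≤ 0 := by
    have h := hant (Set.mem_Icc.mpr ⟨le_refl 1, hx⟩) (Set.mem_Icc.mpr ⟨hx, le_refl x⟩) hx
    rw [hG1] at h; exact h
  have heq : (∫ y in ((1 - z)/x)..((x - z)/x), F y) = G x := by
    exact (intervalIntegral.integral_interval_sub_left
      (hInt _ (hmem x hx).2) (hInt _ (hmem x hx).1)).symm
  rw [← heq] at hGx
  exact hGx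

theorem stmt_4 (r₁ r₂ : ℝ) (hr₁ : r₁ ≤ -1) (hr₂ : r₂ ≤ -1) (h₁₂ : 1 / r₂ ≤ 1 / r₁)
    (z : ℝ) (hz : z ∈ Set.Ioc 0 (1 / 2 : ℝ)) :
    ∀ x : ℝ, 1 ≤ x →
      (∫ y in ((1 - z) / x)..((x - z) / x),
        (1 - y) ^ (1 / r₁ - 1) * y ^ (1 / r₂ - 1) * (y - 1 + z)) ≤ 0 := by
  obtain ⟨hz0, hz2⟩ := hz
  have hr₂0 : r₂ < 0 := by linarith
  have h1 : -1 ≤ 1/r₂ := (le_div_iff_of_neg hr₂0).mpr (by linarith)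
  have h2 : 1/r₂ < 0 := one_div_neg.mpr hr₂0
  exact aux_main (1/r₁ - 1) (1/r₂ - 1) z (by linarith) (by linarith) (by linarith) hz0 hz2
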